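/- Let R = [-1,1]² and let v be any polynomial in two variables of total degree at most 3. Then (1/|R|) ∫_R v = (1/12)(v(-1,-1) + v(1,-1) + v(-1,1) + v(1,1)) + (2/3) v(0,0), where |R| = 4. -/
import Mathlib

open MvPolynomial intervalIntegral

private lemma ds_eval (v : MvPolynomial (Fin 2) ℝ) (p : Fin 2 → ℝ) :
    MvPolynomial.eval p v = ∑ d ∈ v.support, v.coeff d * (p 0 ^ d 0 * p 1 ^ d 1) := by
  conv_lhs => rw [v.as_sum]
  rw [map_sum]
  refine Finset.sum_congr rfl fun d _ => ?_
  rw [eval_monomial, Finsupp.prod_pow, Fin.prod_univ_two]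

theorem diagonal_simpson_rule
    (v : MvPolynomial (Fin 2) ℝ) (hv : v.totalDegree ≤ 3) :
    (1 / (4:ℝ)) * (∫ x in (-1:ℝ)..1, ∫ y in (-1:ℝ)..1,
        MvPolynomial.eval ![x, y] v) =
      (1/12) * (MvPolynomial.eval ![(-1:ℝ), -1] v + MvPolynomial.eval ![(1:ℝ), -1] v
        + MvPolynomial.eval ![(-1:ℝ), 1] v + MvPolynomial.eval ![(1:ℝ), 1] v)
      + (2/3) * MvPolynomial.eval ![(0:ℝ), 0] v := by
  simp only [ds_eval, Matrix.cons_val_zero, Matrix.cons_val_one, Matrix.head_cons]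
  have hx : ∀ x : ℝ, (∫ y in (-1:ℝ)..1, ∑ d ∈ v.support, v.coeff d * (x ^ d 0 * y ^ d 1))
      = ∑ d ∈ v.support, (v.coeff d * x ^ d 0) *
          (((1:ℝ) ^ (d 1 + 1) - (-1:ℝ) ^ (d 1 + 1)) / (d 1 + 1)) := by
    intro x
    rw [intervalIntegral.integral_finset_sum (fun d _ => (by fun_prop :
        Continuous fun y : ℝ => v.coeff d * (x ^ d 0 * y ^ d 1)).intervalIntegrable _ _)]
    refine Finset.sum_congr rfl fun d _ => ?_
    rw [intervalIntegral.integral_congr (g := fun y : ℝ => (v.coeff d * x ^ d 0) * y ^ d 1)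
        (fun y _ => by ring)]
    rw [intervalIntegral.integral_const_mul, integral_pow]
    try push_cast
    try ring
  simp only [hx]
  rw [intervalIntegral.integral_finset_sum (fun d _ => (by fun_prop :
      Continuous fun x : ℝ => (v.coeff d * x ^ d 0) *
        (((1:ℝ) ^ (d 1 + 1) - (-1:ℝ) ^ (d 1 + 1)) / (d 1 + 1))).intervalIntegrable _ _)]
  have hy : ∀ d ∈ v.support, (∫ x in (-1:ℝ)..1, (v.coeff d * x ^ d 0) *
        (((1:ℝ) ^ (d 1 + 1) - (-1:ℝ) ^ (d 1 + 1)) / (d 1 + 1)))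
      = v.coeff d * (((1:ℝ) ^ (d 0 + 1) - (-1:ℝ) ^ (d 0 + 1)) / (d 0 + 1)) *
          (((1:ℝ) ^ (d 1 + 1) - (-1:ℝ) ^ (d 1 + 1)) / (d 1 + 1)) := by
    intro d _
    rw [intervalIntegral.integral_congr (g := fun x : ℝ =>
        (v.coeff d * (((1:ℝ) ^ (d 1 + 1) - (-1:ℝ) ^ (d 1 + 1)) / (d 1 + 1))) * x ^ d 0)
        (fun y _ => by ring)]
    rw [intervalIntegral.integral_const_mul, integral_pow]
    try push_cast
    ring
  rw [Finset.sum_congr rfl hy]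
  simp only [mul_add, Finset.mul_sum, ← Finset.sum_add_distrib]
  refine Finset.sum_congr rfl fun d hd => ?_
  have h3 : d 0 + d 1 ≤ 3 := by
    have h := MvPolynomial.le_totalDegree hd
    rw [Finsupp.sum_fintype _ _ (fun _ => rfl), Fin.sum_univ_two] at h
    omega
  revert h3
  generalize d 0 = i
  generalize d 1 = j
  intro h3
  have hi : i ≤ 3 := by omega
  have hj : j ≤ 3 := by omega
  interval_cases i <;> interval_cases j <;>
    first
      | omega
      | (push_cast; norm_num; try ring)
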